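/- Let m and m' be real linear forms on E = ℝ^{2n}. Then for any Schwartz function a on E, e^{im/2} # a # e^{im/2} = e^{im} a (the Weyl conjugation by half-exponentials of the same linear form produces pointwise multiplication by e^{im}). -/

import Mathlib

open MeasureTheory

/-- Euclidean pairing. -/
def dotp {n : ℕ} (x y : Fin n → ℝ) : ℝ := ∑ i, x i * y i

/-- The Weyl quantization of a symbol `a` on `T*ℝⁿ`, acting on a function `u`:
`a^w u(x) = (2π)^{-n} ∬ e^{i(x−y)·θ} a((x+y)/2, θ) u(y) dy dθ`. -/
noncomputable def weylOp {n : ℕ} (a : ((Fin n → ℝ) × (Fin n → ℝ)) → ℂ)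
    (u : (Fin n → ℝ) → ℂ) (x : Fin n → ℝ) : ℂ :=
  (((2 * Real.pi) ^ (-(n : ℝ)) : ℝ) : ℂ) *
    ∫ y : Fin n → ℝ, ∫ θ : Fin n → ℝ,
      Complex.exp (Complex.I * ((dotp (x - y) θ : ℝ) : ℂ)) *
        a ((2⁻¹ : ℝ) • (x + y), θ) * u y

lemma dotp_add_left {n : ℕ} (x y z : Fin n → ℝ) :
    dotp (x + y) z = dotp x z + dotp y z := by
  simp [dotp, add_mul, Finset.sum_add_distrib]

lemma dotp_sub_left {n : ℕ} (x y z : Fin n → ℝ) :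
    dotp (x - y) z = dotp x z - dotp y z := by
  simp [dotp, sub_mul, Finset.sum_sub_distrib]

lemma dotp_smul_left {n : ℕ} (c : ℝ) (x y : Fin n → ℝ) :
    dotp (c • x) y = c * dotp x y := by
  simp [dotp, Finset.mul_sum, mul_assoc]

lemma dotp_comm {n : ℕ} (x y : Fin n → ℝ) : dotp x y = dotp y x := by
  simp [dotp, mul_comm]

lemma dotp_add_right {n : ℕ} (x y z : Fin n → ℝ) :
    dotp x (y + z) = dotp x y + dotp x z := by
  rw [dotp_comm, dotp_add_left, dotp_comm y x, dotp_comm z x]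

lemma dotp_smul_right {n : ℕ} (c : ℝ) (x y : Fin n → ℝ) :
    dotp x (c • y) = c * dotp x y := by
  rw [dotp_comm, dotp_smul_left, dotp_comm y x]

/-- For a real linear form `m(x,ξ) = x·am + ξ·bm` on `E = ℝ^{2n}` and a Schwartz
function `a`, the Weyl conjugation `e^{im/2} # a # e^{im/2} = e^{im} a`, stated
on the operator level: `(e^{im} a)^w = (e^{im/2})^w ∘ a^w ∘ (e^{im/2})^w`, where
`(e^{im/2})^w u(x) = e^{i (am/2)·(x + bm/4)} u(x + bm/2)`. -/
theorem stmt17 (n : ℕ) (am bm : Fin n → ℝ)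
    (a : SchwartzMap ((Fin n → ℝ) × (Fin n → ℝ)) ℂ) :
    ∀ (u : SchwartzMap (Fin n → ℝ) ℂ) (x : Fin n → ℝ),
      weylOp (fun p => Complex.exp (Complex.I * ((dotp p.1 am + dotp p.2 bm : ℝ) : ℂ)) * a p)
          u x
        = Complex.exp (Complex.I * ((dotp ((2⁻¹ : ℝ) • am) (x + (4⁻¹ : ℝ) • bm) : ℝ) : ℂ)) *
            weylOp a
              (fun y =>
                Complex.exp
                    (Complex.I * ((dotp ((2⁻¹ : ℝ) • am) (y + (4⁻¹ : ℝ) • bm) : ℝ) : ℂ)) *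
                  u (y + (2⁻¹ : ℝ) • bm))
              (x + (2⁻¹ : ℝ) • bm) := by
  intro u x
  unfold weylOp
  set C : ℂ := (((2 * Real.pi) ^ (-(n : ℝ)) : ℝ) : ℂ) with hC
  set ph : ℂ := Complex.exp (Complex.I * ((dotp ((2⁻¹ : ℝ) • am) (x + (4⁻¹ : ℝ) • bm) : ℝ) : ℂ))
    with hph
  -- left-hand side: change variables y ↦ y + bm
  have hL :
      (∫ y : Fin n → ℝ, ∫ θ : Fin n → ℝ,
          Complex.exp (Complex.I * ((dotp (x - y) θ : ℝ) : ℂ)) *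
            (Complex.exp (Complex.I * ((dotp ((2⁻¹ : ℝ) • (x + y)) am + dotp θ bm : ℝ) : ℂ)) *
              a ((2⁻¹ : ℝ) • (x + y), θ)) * u y)
        = ∫ y : Fin n → ℝ, ∫ θ : Fin n → ℝ,
            Complex.exp (Complex.I * ((dotp (x - (y + bm)) θ : ℝ) : ℂ)) *
              (Complex.exp
                  (Complex.I * ((dotp ((2⁻¹ : ℝ) • (x + (y + bm))) am + dotp θ bm : ℝ) : ℂ)) *
                a ((2⁻¹ : ℝ) • (x + (y + bm)), θ)) * u (y + bm) :=
    (MeasureTheory.integral_add_right_eq_self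
      (fun y : Fin n → ℝ => ∫ θ : Fin n → ℝ,
        Complex.exp (Complex.I * ((dotp (x - y) θ : ℝ) : ℂ)) *
          (Complex.exp (Complex.I * ((dotp ((2⁻¹ : ℝ) • (x + y)) am + dotp θ bm : ℝ) : ℂ)) *
            a ((2⁻¹ : ℝ) • (x + y), θ)) * u y) bm).symm
  -- right-hand side: change variables y ↦ y + bm/2
  have hR :
      (∫ y : Fin n → ℝ, ∫ θ : Fin n → ℝ,
          Complex.exp (Complex.I * ((dotp (x + (2⁻¹ : ℝ) • bm - y) θ : ℝ) : ℂ)) *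
            a ((2⁻¹ : ℝ) • (x + (2⁻¹ : ℝ) • bm + y), θ) *
            (Complex.exp
                (Complex.I * ((dotp ((2⁻¹ : ℝ) • am) (y + (4⁻¹ : ℝ) • bm) : ℝ) : ℂ)) *
              u (y + (2⁻¹ : ℝ) • bm)))
        = ∫ y : Fin n → ℝ, ∫ θ : Fin n → ℝ,
            Complex.exp
                (Complex.I *
                  ((dotp (x + (2⁻¹ : ℝ) • bm - (y + (2⁻¹ : ℝ) • bm)) θ : ℝ) : ℂ)) *
              a ((2⁻¹ : ℝ) • (x + (2⁻¹ : ℝ) • bm + (y + (2⁻¹ : ℝ) • bm)), θ) *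
              (Complex.exp
                  (Complex.I *
                    ((dotp ((2⁻¹ : ℝ) • am) (y + (2⁻¹ : ℝ) • bm + (4⁻¹ : ℝ) • bm) : ℝ) : ℂ)) *
                u (y + (2⁻¹ : ℝ) • bm + (2⁻¹ : ℝ) • bm)) :=
    (MeasureTheory.integral_add_right_eq_self
      (fun y : Fin n → ℝ => ∫ θ : Fin n → ℝ,
        Complex.exp (Complex.I * ((dotp (x + (2⁻¹ : ℝ) • bm - y) θ : ℝ) : ℂ)) *
          a ((2⁻¹ : ℝ) • (x + (2⁻¹ : ℝ) • bm + y), θ) *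
          (Complex.exp
              (Complex.I * ((dotp ((2⁻¹ : ℝ) • am) (y + (4⁻¹ : ℝ) • bm) : ℝ) : ℂ)) *
            u (y + (2⁻¹ : ℝ) • bm))) ((2⁻¹ : ℝ) • bm)).symm
  simp only [hL, hR]
  -- now compare the shifted integrands pointwise
  rw [show ∀ A B : ℂ, A * (C * B) = C * (A * B) from fun A B => by ring,
    ← MeasureTheory.integral_const_mul ph]
  congr 1
  refine MeasureTheory.integral_congr_ae (Filter.Eventually.of_forall fun y => ?_)
  beta_reduce
  rw [← MeasureTheory.integral_const_mul ph]
  refine MeasureTheory.integral_congr_ae (Filter.Eventually.of_forall fun θ => ?_)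
  -- vector arguments agree
  have hv1 : (2⁻¹ : ℝ) • (x + (2⁻¹ : ℝ) • bm + (y + (2⁻¹ : ℝ) • bm))
      = (2⁻¹ : ℝ) • (x + (y + bm)) := by module
  have hv2 : y + (2⁻¹ : ℝ) • bm + (2⁻¹ : ℝ) • bm = y + bm := by module
  rw [hv1, hv2]
  -- the phases agree
  set aP : ℂ := a ((2⁻¹ : ℝ) • (x + (y + bm)), θ)
  set uP : ℂ := u (y + bm)
  have hre : (dotp (x - (y + bm)) θ : ℝ) + (dotp ((2⁻¹ : ℝ) • (x + (y + bm))) am + dotp θ bm)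
      = dotp ((2⁻¹ : ℝ) • am) (x + (4⁻¹ : ℝ) • bm)
        + dotp (x + (2⁻¹ : ℝ) • bm - (y + (2⁻¹ : ℝ) • bm)) θ
        + dotp ((2⁻¹ : ℝ) • am) (y + (2⁻¹ : ℝ) • bm + (4⁻¹ : ℝ) • bm) := by
    have c1 : dotp θ bm = dotp bm θ := dotp_comm _ _
    have c2 : dotp am x = dotp x am := dotp_comm _ _
    have c3 : dotp am y = dotp y am := dotp_comm _ _
    have c4 : dotp am bm = dotp bm am := dotp_comm _ _
    simp only [dotp_add_left, dotp_sub_left, dotp_smul_left, dotp_add_right, dotp_smul_right,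
      c1, c2, c3, c4]
    ring
  have hexp :
      Complex.exp (Complex.I * ((dotp (x - (y + bm)) θ : ℝ) : ℂ)) *
          Complex.exp
            (Complex.I * ((dotp ((2⁻¹ : ℝ) • (x + (y + bm))) am + dotp θ bm : ℝ) : ℂ))
        = ph *
            Complex.exp
              (Complex.I * ((dotp (x + (2⁻¹ : ℝ) • bm - (y + (2⁻¹ : ℝ) • bm)) θ : ℝ) : ℂ)) *
            Complex.exp
              (Complex.I *
                ((dotp ((2⁻¹ : ℝ) • am) (y + (2⁻¹ : ℝ) • bm + (4⁻¹ : ℝ) • bm) : ℝ) : ℂ)) := by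
    rw [hph, ← Complex.exp_add, ← Complex.exp_add, ← Complex.exp_add, ← mul_add, ← mul_add,
      ← mul_add, ← Complex.ofReal_add, ← Complex.ofReal_add, ← Complex.ofReal_add, hre]
  linear_combination (aP * uP) * hexp
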